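/- Suppose the passwords are partitioned into equivalence sets by a classification map cls : Fin n → Fin m such that any two passwords in the same equivalence set have the same probability and the same hash cost (cls i = cls j implies p i = p j and k i = k j), and suppose the equivalence sets are indexed in nonincreasing bang-for-buck order: whenever c ≤ c', i ∈ cls⁻¹(c) and j ∈ cls⁻¹(c'), one has p i·k j ≥ p j·k i. Then there exists an optimal attacker strategy (π, B) whose budget B is a prefix sum of equivalence-set sizes, i.e., B = Σ_{c < t} |cls⁻¹(c)| for some t ≤ m. -/

import Mathlib

open Finset

/-- Success probability λ(π,B): sum of probabilities of the first B guesses. -/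
noncomputable def lam (n : ℕ) (p : Fin n → ℝ) (π : Equiv.Perm (Fin n)) (B : ℕ) : ℝ :=
  ∑ t : Fin n, if t.val < B then p (π t) else 0

/-- Attacker utility U(π,B) = v·λ(π,B) − Σ_{t<B} k(π(t))·(1 − λ(π,t)). -/
noncomputable def U (n : ℕ) (p k : Fin n → ℝ) (v : ℝ) (π : Equiv.Perm (Fin n)) (B : ℕ) : ℝ :=
  v * lam n p π B - ∑ t : Fin n, if t.val < B then k (π t) * (1 - lam n p π t.val) else 0

lemma lam_succ (n : ℕ) (p : Fin n → ℝ) (π : Equiv.Perm (Fin n)) (B : ℕ) (hB : B < n) :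
    lam n p π (B + 1) = lam n p π B + p (π ⟨B, hB⟩) := by
  have h : ∀ t : Fin n, (if t.val < B + 1 then p (π t) else 0)
      = (if t.val < B then p (π t) else 0) + (if t = ⟨B, hB⟩ then p (π t) else 0) := by
    intro t
    by_cases h1 : t = ⟨B, hB⟩
    · subst h1
      simp only [Fin.val_mk]
      rw [if_pos (by omega), if_neg (by omega)]; simp
    · have hvne : t.val ≠ B := fun h => h1 (Fin.ext h)
      rw [if_neg h1]
      by_cases h2 : t.val < B
      · rw [if_pos (by omega), if_pos h2]; ring
      · rw [if_neg (by omega), if_neg h2]; ring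
  rw [lam, Finset.sum_congr rfl (fun t _ => h t), Finset.sum_add_distrib,
    Finset.sum_ite_eq' Finset.univ, if_pos (Finset.mem_univ _)]
  rfl

lemma lam_congr (n : ℕ) (p : Fin n → ℝ) (σ π : Equiv.Perm (Fin n)) (B : ℕ)
    (h : ∀ t : Fin n, t.val < B → σ t = π t) (c : ℕ) (hc : c ≤ B) :
    lam n p σ c = lam n p π c := by
  unfold lam
  refine Finset.sum_congr rfl fun t _ => ?_
  split_ifs with ht
  · rw [h t (lt_of_lt_of_le ht hc)]
  · rfl

lemma U_congr (n : ℕ) (p k : Fin n → ℝ) (v : ℝ) (σ π : Equiv.Perm (Fin n)) (B : ℕ)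
    (h : ∀ t : Fin n, t.val < B → σ t = π t) (c : ℕ) (hc : c ≤ B) :
    U n p k v σ c = U n p k v π c := by
  unfold U
  rw [lam_congr n p σ π B h c hc]
  congr 1
  refine Finset.sum_congr rfl fun t _ => ?_
  split_ifs with ht
  · rw [h t (by omega), lam_congr n p σ π B h t.val (by omega)]
  · rfl

lemma U_succ (n : ℕ) (p k : Fin n → ℝ) (v : ℝ) (π : Equiv.Perm (Fin n)) (B : ℕ) (hB : B < n) :
    U n p k v π (B + 1) = U n p k v π B
      + (v * p (π ⟨B, hB⟩) - k (π ⟨B, hB⟩) * (1 - lam n p π B)) := by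
  unfold U
  rw [lam_succ n p π B hB]
  have h : ∀ t : Fin n, (if t.val < B + 1 then k (π t) * (1 - lam n p π t.val) else 0)
      = (if t.val < B then k (π t) * (1 - lam n p π t.val) else 0)
        + (if t = ⟨B, hB⟩ then k (π t) * (1 - lam n p π t.val) else 0) := by
    intro t
    by_cases h1 : t = ⟨B, hB⟩
    · subst h1
      simp only [Fin.val_mk]
      rw [if_pos (by omega), if_neg (by omega)]; simp
    · have hvne : t.val ≠ B := fun h => h1 (Fin.ext h)
      rw [if_neg h1]
      by_cases h2 : t.val < B
      · rw [if_pos (by omega), if_pos h2]; ring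
      · rw [if_neg (by omega), if_neg h2]; ring
  rw [Finset.sum_congr rfl (fun t _ => h t), Finset.sum_add_distrib,
    Finset.sum_ite_eq' Finset.univ, if_pos (Finset.mem_univ _)]
  ring

lemma lam_swap (n : ℕ) (p : Fin n → ℝ) (π : Equiv.Perm (Fin n)) (a b : Fin n) (c : ℕ)
    (hab : a.val < c ↔ b.val < c) :
    lam n p ((Equiv.swap a b).trans π) c = lam n p π c := by
  unfold lam
  simp only [Equiv.trans_apply]
  refine Finset.sum_equiv (Equiv.swap a b) (by simp) ?_
  intro t _
  rcases eq_or_ne t a with rfl | hta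
  · rw [Equiv.swap_apply_left]
    by_cases h : t.val < c
    · rw [if_pos h, if_pos (hab.mp h)]
    · rw [if_neg h, if_neg (fun hbc => h (hab.mpr hbc))]
  rcases eq_or_ne t b with rfl | htb
  · rw [Equiv.swap_apply_right]
    by_cases h : t.val < c
    · rw [if_pos h, if_pos (hab.mpr h)]
    · rw [if_neg h, if_neg (fun hac => h (hab.mp hac))]
  · rw [Equiv.swap_apply_of_ne_of_ne hta htb]

lemma U_swap (n : ℕ) (p k : Fin n → ℝ) (v : ℝ) (π : Equiv.Perm (Fin n)) (a : Fin n)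
    (hb : a.val + 1 < n) (B : ℕ) (hB : a.val + 1 < B) :
    U n p k v ((Equiv.swap a ⟨a.val + 1, hb⟩).trans π) B
      = U n p k v π B
        + (k (π a) * p (π ⟨a.val + 1, hb⟩) - k (π ⟨a.val + 1, hb⟩) * p (π a)) := by
  classical
  set b : Fin n := ⟨a.val + 1, hb⟩ with hbdef
  have hbv : b.val = a.val + 1 := rfl
  have hane : a ≠ b := by
    intro h
    have := congrArg Fin.val h
    omega
  set σ : Equiv.Perm (Fin n) := (Equiv.swap a b).trans π with hσ
  have hσa : σ a = π b := by simp [hσ, Equiv.swap_apply_left]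
  have hσb : σ b = π a := by simp [hσ, Equiv.swap_apply_right]
  have hσt : ∀ t : Fin n, t ≠ a → t ≠ b → σ t = π t := by
    intro t h1 h2
    simp [hσ, Equiv.swap_apply_of_ne_of_ne h1 h2]
  have hlam : ∀ c : ℕ, c ≠ a.val + 1 → lam n p σ c = lam n p π c := by
    intro c hc
    exact lam_swap n p π a b c (by omega)
  have hlamb : lam n p σ (a.val + 1) = lam n p π a.val + p (π b) := by
    have h1 := lam_succ n p σ a.val (by omega)
    have h2 : (⟨a.val, by omega⟩ : Fin n) = a := rfl
    rw [h2, hσa] at h1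
    rw [h1, hlam a.val (by omega)]
  have hlamb' : lam n p π (a.val + 1) = lam n p π a.val + p (π a) := by
    have h1 := lam_succ n p π a.val (by omega)
    have h2 : (⟨a.val, by omega⟩ : Fin n) = a := rfl
    rw [h2] at h1
    exact h1
  unfold U
  rw [hlam B (by omega)]
  have hcost : (∑ t : Fin n, if t.val < B then k (σ t) * (1 - lam n p σ t.val) else 0)
      = (∑ t : Fin n, if t.val < B then k (π t) * (1 - lam n p π t.val) else 0)
        + (k (π b) * p (π a) - k (π a) * p (π b)) := by
    have hdiff : (∑ t : Fin n,
        ((if t.val < B then k (σ t) * (1 - lam n p σ t.val) else 0)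
          - (if t.val < B then k (π t) * (1 - lam n p π t.val) else 0)))
        = k (π b) * p (π a) - k (π a) * p (π b) := by
      rw [← Finset.sum_subset (Finset.subset_univ ({a, b} : Finset (Fin n)))
        (by
          intro x _ hx
          simp only [Finset.mem_insert, Finset.mem_singleton, not_or] at hx
          have hxb : x.val ≠ a.val + 1 := by
            intro h
            exact hx.2 (Fin.ext h)
          rw [hσt x hx.1 hx.2, hlam x.val hxb, sub_self])]
      rw [Finset.sum_pair hane]
      rw [if_pos (show a.val < B by omega), if_pos (show a.val < B by omega),
        if_pos (show b.val < B by omega), if_pos (show b.val < B by omega)]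
      rw [hσa, hσb, hlam a.val (by omega)]
      have : lam n p σ b.val = lam n p π a.val + p (π b) := hlamb
      rw [this]
      have : lam n p π b.val = lam n p π a.val + p (π a) := hlamb'
      rw [this]
      ring
    have := Finset.sum_sub_distrib (s := (Finset.univ : Finset (Fin n)))
      (f := fun t : Fin n => if t.val < B then k (σ t) * (1 - lam n p σ t.val) else 0)
      (g := fun t : Fin n => if t.val < B then k (π t) * (1 - lam n p π t.val) else 0)
    rw [this] at hdiff
    linarith
  rw [hcost]
  ring

lemma bubble (n m : ℕ) (p k : Fin n → ℝ) (v : ℝ) (cls : Fin n → Fin m)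
    (horder : ∀ i j : Fin n, cls i ≤ cls j → p i * k j ≥ p j * k i) :
    ∀ (d : ℕ) (π : Equiv.Perm (Fin n)) (B : ℕ), B ≤ n → ∀ (s : Fin n),
      s.val + d + 1 = B →
      (∀ t : Fin n, t.val < B → cls (π t) ≤ cls (π s)) →
      ∃ π' : Equiv.Perm (Fin n), U n p k v π' B ≥ U n p k v π B ∧
        ∀ t e : Fin n, t.val < B → e.val = B - 1 → cls (π' t) ≤ cls (π' e) := by
  intro d
  induction d with
  | zero =>
    intro π B hBn s hs hmax
    refine ⟨π, le_refl _, fun t e ht he => ?_⟩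
    have : e = s := Fin.ext (by omega)
    rw [this]
    exact hmax t ht
  | succ d ih =>
    intro π B hBn s hs hmax
    have hb : s.val + 1 < n := by omega
    set b : Fin n := ⟨s.val + 1, hb⟩ with hbdef
    have hbv : b.val = s.val + 1 := rfl
    set σ : Equiv.Perm (Fin n) := (Equiv.swap s b).trans π with hσ
    have hswapU : U n p k v σ B ≥ U n p k v π B := by
      rw [U_swap n p k v π s hb B (by omega)]
      have hcls : cls (π b) ≤ cls (π s) := hmax b (by omega)
      have := horder (π b) (π s) hcls
      nlinarith [this]
    have hσb : σ b = π s := by simp [hσ, Equiv.swap_apply_right]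
    have hmax' : ∀ t : Fin n, t.val < B → cls (σ t) ≤ cls (σ b) := by
      intro t ht
      rw [hσb]
      rcases eq_or_ne t s with rfl | h1
      · have : σ t = π b := by simp [hσ, Equiv.swap_apply_left]
        rw [this]
        exact hmax b (by omega)
      rcases eq_or_ne t b with rfl | h2
      · rw [hσb]
      · have : σ t = π t := by simp [hσ, Equiv.swap_apply_of_ne_of_ne h1 h2]
        rw [this]
        exact hmax t ht
    obtain ⟨π', h1, h2⟩ := ih σ B hBn b (by omega) hmax'
    exact ⟨π', le_trans hswapU h1, h2⟩

theorem stmt_11 (n m : ℕ) (p k : Fin n → ℝ) (v : ℝ)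
    (hp : ∀ i, 0 ≤ p i) (hpsum : ∑ i, p i ≤ 1) (hk : ∀ i, 0 < k i) (hv : 0 ≤ v)
    (cls : Fin n → Fin m)
    (hcls : ∀ i j, cls i = cls j → p i = p j ∧ k i = k j)
    (horder : ∀ i j : Fin n, cls i ≤ cls j → p i * k j ≥ p j * k i) :
    ∃ (π : Equiv.Perm (Fin n)) (B : ℕ), B ≤ n ∧
      (∀ (π' : Equiv.Perm (Fin n)) (B' : ℕ), B' ≤ n →
        U n p k v π B ≥ U n p k v π' B') ∧
      (∃ t ≤ m, B = ∑ c ∈ Finset.univ.filter (fun c : Fin m => c.val < t),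
        (Finset.univ.filter (fun i : Fin n => cls i = c)).card) := by
  classical
  set F : Equiv.Perm (Fin n) × Fin (n + 1) → ℝ := fun q => U n p k v q.1 q.2.val with hF
  obtain ⟨q0, -, hq0⟩ := Finset.exists_max_image
    (Finset.univ : Finset (Equiv.Perm (Fin n) × Fin (n + 1))) F ⟨(1, 0), Finset.mem_univ _⟩
  set M : ℝ := F q0 with hM
  set Opt : Finset (Equiv.Perm (Fin n) × Fin (n + 1)) :=
    Finset.univ.filter (fun q => F q = M) with hOpt
  have hq0mem : q0 ∈ Opt := by simp [hOpt]; exact hM.symm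
  obtain ⟨q1, hq1mem, hq1max⟩ := Finset.exists_max_image Opt (fun q => q.2.val) ⟨q0, hq0mem⟩
  have hq1U : U n p k v q1.1 q1.2.val = M := by
    have := (Finset.mem_filter.mp hq1mem).2
    simpa [hF] using this
  have hopt : ∀ (π' : Equiv.Perm (Fin n)) (B' : ℕ), B' ≤ n → U n p k v π' B' ≤ M := by
    intro π' B' hB'
    have := hq0 (π', ⟨B', by omega⟩) (Finset.mem_univ _)
    simpa [hF] using this
  set π1 : Equiv.Perm (Fin n) := q1.1 with hπ1
  set Bm : ℕ := q1.2.val with hBmdef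
  have hBmn : Bm ≤ n := by omega
  have hmaxB : ∀ (σ : Equiv.Perm (Fin n)) (B' : ℕ), B' ≤ n → U n p k v σ B' = M → B' ≤ Bm := by
    intro σ B' h hU'
    have hmem : (σ, (⟨B', by omega⟩ : Fin (n + 1))) ∈ Opt := by
      simp [hOpt, hF, hU']
    exact hq1max _ hmem
  by_cases h0 : Bm = 0
  · refine ⟨π1, Bm, hBmn, ?_, 0, by omega, ?_⟩
    · intro π' B' hB'
      rw [hq1U]
      exact hopt π' B' hB'
    · simp [h0]
  by_cases hn : Bm = n
  · refine ⟨π1, Bm, hBmn, ?_, m, le_refl m, ?_⟩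
    · intro π' B' hB'
      rw [hq1U]
      exact hopt π' B' hB'
    · have h1 : (Finset.univ : Finset (Fin m)).filter (fun c : Fin m => c.val < m)
          = Finset.univ := by
        apply Finset.filter_true_of_mem
        intro c _
        exact c.isLt
      rw [h1, hn]
      have := Finset.card_eq_sum_card_fiberwise
        (f := cls) (s := (Finset.univ : Finset (Fin n))) (t := (Finset.univ : Finset (Fin m)))
        (fun x _ => Finset.mem_univ _)
      simpa using this
  have hBpos : 0 < Bm := Nat.pos_of_ne_zero h0
  have hBlt : Bm < n := lt_of_le_of_ne hBmn hn
  obtain ⟨s, hsmem, hsmax⟩ := Finset.exists_max_image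
    (Finset.univ.filter (fun t : Fin n => t.val < Bm)) (fun t => cls (π1 t))
    ⟨⟨0, by omega⟩, by simp [hBpos]⟩
  have hs : s.val < Bm := by simpa using hsmem
  obtain ⟨π, hπU, hπmax⟩ := bubble n m p k v cls horder (Bm - 1 - s.val) π1 Bm hBmn s
    (by omega) (fun t ht => hsmax t (by simp [ht]))
  have hU1 : U n p k v π1 Bm = M := hq1U
  have hUM : U n p k v π Bm = M := le_antisymm (hopt π Bm hBmn) (by rw [← hU1]; exact hπU)
  set em1 : Fin n := ⟨Bm - 1, by omega⟩ with hem1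
  have hem1v : em1.val = Bm - 1 := rfl
  -- marginal at Bm - 1 is nonnegative
  have hmarg : 0 ≤ v * p (π em1) - k (π em1) * (1 - lam n p π (Bm - 1)) := by
    have hsucc := U_succ n p k v π (Bm - 1) (by omega)
    rw [show Bm - 1 + 1 = Bm by omega] at hsucc
    have h2 : (⟨Bm - 1, by omega⟩ : Fin n) = em1 := rfl
    rw [h2] at hsucc
    have hle := hopt π (Bm - 1) (by omega)
    rw [← hUM] at hle
    linarith [hsucc, hle]
  have hlamBm : lam n p π Bm = lam n p π (Bm - 1) + p (π em1) := by
    have := lam_succ n p π (Bm - 1) (by omega)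
    rw [show Bm - 1 + 1 = Bm by omega] at this
    exact this
  have claim1 : ∀ i : Fin n, Bm ≤ (π.symm i).val → cls (π em1) < cls i := by
    intro i hi
    by_contra hcon
    push_neg at hcon
    have hratio := horder i (π em1) hcon
    set y : Fin n := ⟨Bm, hBlt⟩ with hy
    have hyv : y.val = Bm := rfl
    set σ : Equiv.Perm (Fin n) := (Equiv.swap (π.symm i) y).trans π with hσ
    have hagree : ∀ t : Fin n, t.val < Bm → σ t = π t := by
      intro t ht
      have h1 : t ≠ π.symm i := by
        intro h
        rw [h] at ht
        omega
      have h2 : t ≠ y := by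
        intro h
        rw [h] at ht
        omega
      simp [hσ, Equiv.swap_apply_of_ne_of_ne h1 h2]
    have hσy : σ y = i := by simp [hσ, Equiv.swap_apply_right]
    have hUσ : U n p k v σ Bm = M := by
      rw [U_congr n p k v σ π Bm hagree Bm le_rfl, hUM]
    have hlamσ : lam n p σ Bm = lam n p π Bm := lam_congr n p σ π Bm hagree Bm le_rfl
    have hsucc := U_succ n p k v σ Bm hBlt
    have hyeq : (⟨Bm, hBlt⟩ : Fin n) = y := rfl
    rw [hyeq, hσy] at hsucc
    have hgain : 0 ≤ v * p i - k i * (1 - lam n p σ Bm) := by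
      rw [hlamσ, hlamBm]
      nlinarith [mul_nonneg hv (sub_nonneg.mpr hratio),
        mul_nonneg (le_of_lt (hk i)) hmarg,
        mul_nonneg (mul_nonneg (le_of_lt (hk i)) (le_of_lt (hk (π em1)))) (hp (π em1)),
        hk (π em1)]
    have hle : U n p k v σ (Bm + 1) ≤ M := hopt σ (Bm + 1) (by omega)
    have heq : U n p k v σ (Bm + 1) = M := le_antisymm hle (by rw [hsucc, hUσ]; linarith)
    have := hmaxB σ (Bm + 1) (by omega) heq
    omega
  -- the guessed set equals all passwords of class ≤ cls (π em1)
  have hset : Finset.univ.filter (fun i : Fin n => cls i ≤ cls (π em1))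
      = (Finset.univ.filter (fun t : Fin n => t.val < Bm)).image π := by
    ext i
    simp only [Finset.mem_filter, Finset.mem_image, Finset.mem_univ, true_and]
    constructor
    · intro hi
      refine ⟨π.symm i, ?_, Equiv.apply_symm_apply π i⟩
      by_contra h
      push_neg at h
      exact absurd hi (not_le.mpr (claim1 i (by omega)))
    · rintro ⟨t, ht, rfl⟩
      exact hπmax t em1 ht hem1v
  have hcard0 : (Finset.univ.filter (fun t : Fin n => t.val < Bm)).card = Bm := by
    have heq : Finset.univ.filter (fun t : Fin n => t.val < Bm)
        = Finset.Iio (⟨Bm, hBlt⟩ : Fin n) := by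
      ext t
      simp [Fin.lt_def]
    rw [heq, Fin.card_Iio]
  have hcard1 : Bm = (Finset.univ.filter (fun i : Fin n => cls i ≤ cls (π em1))).card := by
    rw [hset, Finset.card_image_of_injective _ π.injective, hcard0]
  refine ⟨π, Bm, hBmn, ?_, (cls (π em1)).val + 1, by omega, ?_⟩
  · intro π' B' hB'
    rw [hUM]
    exact hopt π' B' hB'
  · rw [hcard1]
    rw [Finset.card_eq_sum_card_fiberwise
      (f := cls) (s := Finset.univ.filter (fun i : Fin n => cls i ≤ cls (π em1)))
      (t := Finset.univ.filter (fun c : Fin m => c.val < (cls (π em1)).val + 1))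
      (by
        intro x hx
        simp only [Finset.mem_coe, Finset.mem_filter, Finset.mem_univ, true_and] at hx ⊢
        have := Fin.le_def.mp hx
        omega)]
    refine Finset.sum_congr rfl fun c hc => ?_
    congr 1
    simp only [Finset.mem_filter, Finset.mem_univ, true_and] at hc
    ext i
    simp only [Finset.mem_filter, Finset.mem_univ, true_and]
    constructor
    · exact fun h => h.2
    · intro h
      refine ⟨?_, h⟩
      rw [h]
      exact Fin.le_def.mpr (by omega)
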